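/- Let K be a compact group acting linearly and continuously on a finite-dimensional real vector space V, and let C ⊆ V be a closed convex cone invariant under K with C ≠ C ∩ (−C). Then there exists a non-zero K-fixed vector v ∈ C. (The vector is obtained by averaging over K with Haar measure an element v ∈ C on which some linear functional non-negative on C is strictly positive.) -/

import Mathlib

open MeasureTheory

/-- If a compact group `K` acts linearly and continuously on a
finite-dimensional real vector space `V` leaving invariant a closed convex cone `C`
which is not a linear subspace (`C ≠ C ∩ (-C)`), then `C` contains a non-zero
`K`-fixed vector. -/
theorem invariant_cone_has_fixed_vector
    {V : Type*} [NormedAddCommGroup V] [NormedSpace ℝ V] [FiniteDimensional ℝ V]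
    {K : Type*} [Group K] [TopologicalSpace K] [IsTopologicalGroup K] [CompactSpace K]
    (ρ : K →* (V ≃ₗ[ℝ] V))
    (hcont : Continuous fun p : K × V => ρ p.1 p.2)
    (C : Set V) (hclosed : IsClosed C) (hconv : Convex ℝ C)
    (hcone : ∀ v ∈ C, ∀ t : ℝ, 0 < t → t • v ∈ C)
    (hinv : ∀ k : K, ∀ v ∈ C, ρ k v ∈ C)
    (hns : C ≠ C ∩ (-C)) :
    ∃ v ∈ C, v ≠ 0 ∧ ∀ k : K, ρ k v = v := by
  -- pick `v ∈ C` with `-v ∉ C`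
  obtain ⟨v, hv, hvnot⟩ : ∃ v ∈ C, -v ∉ C := by
    by_contra h
    push_neg at h
    apply hns
    ext x
    constructor
    · intro hx
      exact ⟨hx, by simpa using h x hx⟩
    · exact fun hx => hx.1
  -- `0 ∈ C`
  have h0 : (0 : V) ∈ C := by
    have : Filter.Tendsto (fun n : ℕ => ((n : ℝ) + 1)⁻¹ • v) Filter.atTop (nhds 0) := by
      have ht : Filter.Tendsto (fun n : ℕ => ((n : ℝ) + 1)⁻¹) Filter.atTop (nhds 0) :=
        tendsto_one_div_add_atTop_nhds_zero_nat.congr (by intro n; simp [one_div])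
      simpa using ht.smul_const v
    refine hclosed.mem_of_tendsto this (Filter.Eventually.of_forall fun n => ?_)
    exact hcone v hv _ (by positivity)
  -- separating functional
  obtain ⟨f, u, hfu, huf⟩ := geometric_hahn_banach_closed_point hconv hclosed hvnot
  have hu0 : 0 < u := by simpa using hfu 0 h0
  -- `f ≤ 0` on `C`
  have hfC : ∀ c ∈ C, f c ≤ 0 := by
    intro c hc
    by_contra h
    push_neg at h
    have ht : 0 < u / f c + 1 := by positivity
    have := hfu _ (hcone c hc _ ht)
    rw [_root_.map_smul, smul_eq_mul] at this
    have : u + f c < u := by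
      have h' : (u / f c + 1) * f c = u + f c := by field_simp
      linarith [h' ▸ this]
    linarith
  have hfv : f v < 0 := by
    have : u < -f v := by simpa using huf
    linarith
  -- Haar measure
  letI : MeasurableSpace K := borel K
  haveI : BorelSpace K := ⟨rfl⟩
  let K₀ : TopologicalSpace.PositiveCompacts K := ⊤
  let μ : Measure K := Measure.haarMeasure K₀
  haveI : IsProbabilityMeasure μ := by
    constructor
    have := Measure.haarMeasure_self (K₀ := K₀)
    simpa [μ, K₀] using this
  -- the orbit map
  set g : K → V := fun k => ρ k v with hg_def
  have hg : Continuous g := hcont.comp (continuous_id.prodMk continuous_const)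
  have hgC : ∀ k, g k ∈ C := fun k => hinv k v hv
  have hgint : Integrable g μ :=
    hg.integrable_of_hasCompactSupport
      (IsCompact.of_isClosed_subset isCompact_univ (isClosed_tsupport _) (Set.subset_univ _))
  set w : V := ∫ k, g k ∂μ with hw_def
  refine ⟨w, ?_, ?_, ?_⟩
  · exact hconv.integral_mem hclosed (Filter.Eventually.of_forall hgC) hgint
  · -- `w ≠ 0` since `(-f) w > 0`
    have hfw : f w = ∫ k, f (g k) ∂μ := by
      simpa using (f.integral_comp_comm hgint).symm
    have hpos : 0 < ∫ k, -f (g k) ∂μ := by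
      rw [integral_pos_iff_support_of_nonneg
        (fun k => by simpa using hfC _ (hgC k))
        (by exact ((f.integrable_comp hgint).neg))]
      have hopen : IsOpen {k : K | 0 < -f (g k)} :=
        isOpen_lt continuous_const (continuous_neg.comp (f.continuous.comp hg))
      have h1 : (1 : K) ∈ {k : K | 0 < -f (g k)} := by
        simp only [Set.mem_setOf_eq, hg_def, map_one]
        simpa using hfv
      calc (0 : ENNReal) < μ {k : K | 0 < -f (g k)} :=
            hopen.measure_pos μ ⟨1, h1⟩
        _ ≤ μ (Function.support fun k => -f (g k)) := by
            apply measure_mono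
            intro k hk
            exact ne_of_gt hk
    intro hw0
    rw [hw0] at hfw
    simp only [map_zero] at hfw
    rw [integral_neg, ← hfw] at hpos
    simp at hpos
  · -- `w` is fixed
    intro k
    let T : V →L[ℝ] V := LinearMap.toContinuousLinearMap (ρ k).toLinearMap
    have hT : ∀ x, T x = ρ k x := fun x => rfl
    calc ρ k w = T w := rfl
      _ = ∫ x, T (g x) ∂μ := (T.integral_comp_comm hgint).symm
      _ = ∫ x, g (k * x) ∂μ := by
          congr 1; ext x
          simp only [hT, hg_def, map_mul]
          rfl
      _ = ∫ x, g x ∂μ := integral_mul_left_eq_self g k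
      _ = w := rfl
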